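/- Let ψ : X → ℤ^d be a cocycle over an ergodic transformation T that, viewed as an ℝ^d-valued cocycle, is cohomologous to a cocycle ψ* : X → ℝ^d for which there exist reals α₁,…,α_d, not all rational, such that Σⱼ αⱼψ*ⱼ(x) ∈ ℤ for a.e. x. Assuming Schmidt's theory of essential values (E_G(ψ) is a closed subgroup of G, invariant under cohomology, satisfies E_{ℤ^d}(ψ)=E_{ℝ^d}(ψ) for ℤ^d-valued ψ, contained in any closed subgroup containing the values of the cocycle, and E_G(ψ)=G iff T_ψ is ergodic), the skew product T_ψ : X × ℤ^d → X × ℤ^d is not ergodic. -/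
import Mathlib


open MeasureTheory

/-- If a `ℤ^d`-valued cocycle `ψ` over an ergodic `T` is cohomologous (as an
`ℝ^d`-valued cocycle) to `ψ*` with `∑ αⱼ ψ*ⱼ` integer-valued a.e. for some
`α` not all rational, then (assuming Schmidt's theory of essential values as
hypotheses) the skew product `T_ψ : X × ℤ^d → X × ℤ^d` is not ergodic. -/
theorem stmt8 {X : Type*} [MeasurableSpace X] {d : ℕ}
    (μ : Measure X) [IsProbabilityMeasure μ]
    (T : X → X) (hT : Ergodic T μ)
    (ψ : X → (Fin d → ℤ))
    -- the essential-value group of an ℝ^d-valued cocycle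
    (E : (X → (Fin d → ℝ)) → Set (Fin d → ℝ))
    -- essential values are invariant under cohomology
    (hcoh : ∀ φ₁ φ₂ g : X → (Fin d → ℝ),
      (∀ x, φ₁ x = φ₂ x + g x - g (T x)) → E φ₁ = E φ₂)
    -- essential values lie in any closed subgroup containing the values a.e.
    (hval : ∀ (φ : X → (Fin d → ℝ)) (H : AddSubgroup (Fin d → ℝ)),
      IsClosed (H : Set (Fin d → ℝ)) → (∀ᵐ x ∂μ, φ x ∈ H) → E φ ⊆ H)
    -- ergodicity of the ℤ^d skew product forces E_{ℝ^d}(ψ) ⊇ ℤ^d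
    -- (via E_{ℤ^d}(ψ) = ℤ^d and E_{ℤ^d}(ψ) = E_{ℝ^d}(ψ))
    (herg : Ergodic (fun p : X × (Fin d → ℤ) => (T p.1, p.2 + ψ p.1))
        (μ.prod Measure.count) →
      ∀ m : Fin d → ℤ, (fun i => (m i : ℝ)) ∈ E (fun x i => (ψ x i : ℝ)))
    (ψs g : X → (Fin d → ℝ))
    (hcohom : ∀ x, (fun i => (ψ x i : ℝ)) = ψs x + g x - g (T x))
    (α : Fin d → ℝ) (hα : ¬ ∀ j, ∃ q : ℚ, α j = (q : ℝ))
    (hint : ∀ᵐ x ∂μ, ∃ m : ℤ, ∑ j, α j * ψs x j = (m : ℝ)) :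
    ¬ Ergodic (fun p : X × (Fin d → ℤ) => (T p.1, p.2 + ψ p.1))
        (μ.prod Measure.count) := by
  intro hergodic
  -- the closed subgroup H = {v | ∑ αⱼ vⱼ ∈ ℤ}
  set H : AddSubgroup (Fin d → ℝ) :=
    { carrier := {v | ∃ m : ℤ, ∑ j, α j * v j = (m : ℝ)}
      zero_mem' := ⟨0, by simp⟩
      add_mem' := by
        rintro a b ⟨m, hm⟩ ⟨n, hn⟩
        exact ⟨m + n, by simp [mul_add, Finset.sum_add_distrib, hm, hn]⟩
      neg_mem' := by
        rintro a ⟨m, hm⟩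
        exact ⟨-m, by simp [mul_comm, ← Finset.sum_neg_distrib, ← hm, mul_comm]⟩ } with hH
  have hHclosed : IsClosed (H : Set (Fin d → ℝ)) := by
    have : (H : Set (Fin d → ℝ)) =
        (fun v : Fin d → ℝ => ∑ j, α j * v j) ⁻¹' (Set.range ((↑) : ℤ → ℝ)) := by
      ext v; simp [hH, Set.mem_preimage, Set.range, eq_comm]
    rw [this]
    exact (Int.isClosedEmbedding_coe_real.isClosed_range).preimage
      (by continuity)
  have hEH : E (fun x i => (ψ x i : ℝ)) ⊆ H := by
    rw [hcoh _ ψs g hcohom]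
    exact hval ψs H hHclosed (by filter_upwards [hint] with x hx; exact hx)
  apply hα
  intro j
  obtain ⟨m, hm⟩ := hEH (herg hergodic (fun i => if i = j then 1 else 0))
  refine ⟨m, ?_⟩
  simpa [Finset.sum_ite_eq', mul_ite, apply_ite] using hm
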